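/- arXiv:0809.0060 — 4 statements merged into one kernel-verified Lean document; each statement's English description precedes it below -/
import Mathlib

section
/- In the gadget game Check^{i,a}, player 1 has a winning strategy from configuration (s_0^{i,a}, N(u)) if and only if the i-th symbol of the configuration u equals a; i.e., a sequence of choices c_0,…,c_{n-1} with c_k ∈ {digit(b)·G^k : b ∈ A} for k ≠ i and c_i = digit(a)·G^i sums to N(u) exactly when b_i = a, where u = b_0⋯b_{n-1}. -/
lemma digit_sum_inj (G : ℕ) : ∀ n (f g : ℕ → ℕ), (∀ k < n, f k < G) → (∀ k < n, g k < G) →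
    (∑ k ∈ Finset.range n, f k * G ^ k) = (∑ k ∈ Finset.range n, g k * G ^ k) →
    ∀ k < n, f k = g k := by
  intro n
  induction n with
  | zero => intro f g _ _ _ k hk; omega
  | succ m ih =>
    intro f g hf hg hsum k hk
    rw [Finset.sum_range_succ', Finset.sum_range_succ'] at hsum
    have hrw : ∀ h : ℕ → ℕ, ∑ k ∈ Finset.range m, h (k + 1) * G ^ (k + 1)
        = G * ∑ k ∈ Finset.range m, h (k + 1) * G ^ k := by
      intro h
      rw [Finset.mul_sum]
      exact Finset.sum_congr rfl (fun x _ => by ring)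
    rw [hrw f, hrw g] at hsum
    simp only [pow_zero, mul_one] at hsum
    have hf0 : f 0 < G := hf 0 (by omega)
    have hg0 : g 0 < G := hg 0 (by omega)
    have h0 : f 0 = g 0 := by
      have := congrArg (· % G) hsum
      simpa [Nat.add_mul_mod_self_left, Nat.mul_add_mod, Nat.mod_eq_of_lt hf0,
        Nat.mod_eq_of_lt hg0] using this
    have hS : ∑ k ∈ Finset.range m, f (k + 1) * G ^ k
        = ∑ k ∈ Finset.range m, g (k + 1) * G ^ k := by
      have hGpos : 0 < G := by omega
      have : G * ∑ k ∈ Finset.range m, f (k + 1) * G ^ k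
          = G * ∑ k ∈ Finset.range m, g (k + 1) * G ^ k := by omega
      exact Nat.eq_of_mul_eq_mul_left hGpos this
    rcases k with _ | j
    · exact h0
    · exact ih (fun k => f (k + 1)) (fun k => g (k + 1))
        (fun k hk => hf (k + 1) (by omega)) (fun k hk => hg (k + 1) (by omega))
        hS j (by omega)

/-- In the gadget game `Check^{i,a}`, player 1 can count down from `N(u)` to `0`
(i.e. pick `c_k ∈ {digit(b)·G^k : b ∈ A}` for `k ≠ i` and `c_i = digit(a)·G^i` summing to
`N(u)`) if and only if the `i`-th symbol of `u` is `a`. -/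
theorem check_gadget_winning_iff {A : Type*} [Fintype A] [Nonempty A]
    (G n : ℕ) (hcard : Fintype.card A < G)
    (digit : A → Fin G) (hdigit : Function.Injective digit)
    (i : Fin n) (a : A) (u : Fin n → A) :
    (∃ c : Fin n → ℕ,
        c i = (digit a : ℕ) * G ^ (i : ℕ) ∧
        (∀ k : Fin n, k ≠ i → ∃ b : A, c k = (digit b : ℕ) * G ^ (k : ℕ)) ∧
        ∑ k : Fin n, c k = ∑ k : Fin n, (digit (u k) : ℕ) * G ^ (k : ℕ))
      ↔ u i = a := by
  constructor
  · rintro ⟨c, hci, hc, hsum⟩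
    -- choose b : Fin n → A with b i = a and c k = digit (b k) * G ^ k for all k
    have hb : ∀ k : Fin n, ∃ b : A, c k = (digit b : ℕ) * G ^ (k : ℕ) := by
      intro k
      by_cases hk : k = i
      · exact ⟨a, by rw [hk, hci]⟩
      · exact hc k hk
    choose b hbspec using hb
    have hbi : digit (b i) = digit a := by
      have := hbspec i
      rw [hci] at this
      have hGpos : 0 < G := by
        have := (digit a).isLt; omega
      have : (digit (b i) : ℕ) = (digit a : ℕ) :=
        Nat.eq_of_mul_eq_mul_right (Nat.pow_pos hGpos) this.symm
      exact Fin.ext this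
    have hbi' : b i = a := hdigit hbi
    -- define extended functions
    set f : ℕ → ℕ := fun k => if h : k < n then (digit (b ⟨k, h⟩) : ℕ) else 0 with hfdef
    set g : ℕ → ℕ := fun k => if h : k < n then (digit (u ⟨k, h⟩) : ℕ) else 0 with hgdef
    have hsum' : ∑ k ∈ Finset.range n, f k * G ^ k = ∑ k ∈ Finset.range n, g k * G ^ k := by
      rw [Finset.sum_range fun k => f k * G ^ k, Finset.sum_range fun k => g k * G ^ k]
      calc ∑ k : Fin n, f k * G ^ (k : ℕ)
          = ∑ k : Fin n, c k := by
            refine Finset.sum_congr rfl fun k _ => ?_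
            simp only [hfdef, dif_pos k.isLt]
            rw [hbspec k]
        _ = ∑ k : Fin n, (digit (u k) : ℕ) * G ^ (k : ℕ) := hsum
        _ = ∑ k : Fin n, g k * G ^ (k : ℕ) := by
            refine Finset.sum_congr rfl fun k _ => ?_
            simp only [hgdef, dif_pos k.isLt]
    have key := digit_sum_inj G n f g
      (fun k hk => by simp only [hfdef, dif_pos hk]; exact (digit _).isLt)
      (fun k hk => by simp only [hgdef, dif_pos hk]; exact (digit _).isLt)
      hsum' i i.isLt
    simp only [hfdef, hgdef, dif_pos i.isLt] at key
    have : b ⟨i, i.isLt⟩ = u ⟨i, i.isLt⟩ := hdigit (Fin.ext key)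
    rw [show (⟨i, i.isLt⟩ : Fin n) = i from rfl] at this
    rw [← this, hbi']
  · intro hui
    refine ⟨fun k => (digit (u k) : ℕ) * G ^ (k : ℕ), by simp only [hui], fun k _ => ⟨u k, rfl⟩, rfl⟩
end

section
/- For a structurally non-Zeno finite timed Markov decision process, every cycle (finite path returning to its starting state) has total duration at least 1; consequently any path of total duration at most D visits at most (D+1)·|S| states. -/
/-- A finite path of a discrete TMDP with transition relation
`trans ⊆ S × ℕ × Dist(S)`: the sequence of visited states `p` together with the
durations `d` of its transitions, each taken via some transition of the TMDP whose
distribution assigns positive probability to the successor. -/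
def IsTMDPPath {S : Type*} (trans : Set (S × ℕ × PMF S)) :
    ∀ n : ℕ, (Fin (n + 1) → S) → (Fin n → ℕ) → Prop :=
  fun n p d =>
    ∀ k : Fin n, ∃ ν : PMF S, (p k.castSucc, d k, ν) ∈ trans ∧ p k.succ ∈ ν.support

/-- In a structurally non-Zeno finite TMDP (every cycle has total
duration at least 1, as durations are natural numbers and cycles have positive
duration), any path of total duration at most `D` visits at most `(D+1)·|S|` states,
i.e. has length (number of transitions) at most `(D+1)·|S|`. -/
theorem structurally_nonZeno_path_length_bound {S : Type*} [Fintype S]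
    (trans : Set (S × ℕ × PMF S))
    (hNZ : ∀ (n : ℕ) (p : Fin (n + 1) → S) (d : Fin n → ℕ), 0 < n →
      IsTMDPPath trans n p d → p 0 = p (Fin.last n) → 0 < ∑ k, d k)
    (D : ℕ) :
    ∀ (n : ℕ) (p : Fin (n + 1) → S) (d : Fin n → ℕ),
      IsTMDPPath trans n p d → ∑ k, d k ≤ D → n ≤ (D + 1) * Fintype.card S := by
  classical
  intro n p d hpath hsum
  set d' : ℕ → ℕ := fun k => if h : k < n then d ⟨k, h⟩ else 0 with hd'
  set s : ℕ → ℕ := fun i => ∑ k ∈ Finset.range i, d' k with hs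
  have hsn : s n = ∑ k, d k := by
    rw [hs]
    simp only
    rw [← Fin.sum_univ_eq_sum_range]
    apply Finset.sum_congr rfl
    intro k _
    simp [hd', k.isLt]
  have hmono : Monotone s := fun a b hab =>
    Finset.sum_le_sum_of_subset (Finset.range_subset_range.2 hab)
  have hbound : ∀ i : Fin (n + 1), s i ≤ D := fun i =>
    le_trans (hmono (Nat.lt_succ_iff.mp i.isLt)) (hsn ▸ hsum)
  have key : ∀ i j : Fin (n + 1), (i : ℕ) < (j : ℕ) → s i = s j → p i = p j → False := by
    intro i j hij hsij hpij
    have hjn : (j : ℕ) ≤ n := Nat.lt_succ_iff.mp j.isLt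
    set m : ℕ := (j : ℕ) - (i : ℕ) with hm
    have hm0 : 0 < m := by omega
    have him : (i : ℕ) + m = (j : ℕ) := by omega
    set q : Fin (m + 1) → S := fun k =>
      p ⟨(i : ℕ) + (k : ℕ), by have := k.isLt; omega⟩ with hq
    set e : Fin m → ℕ := fun k =>
      d ⟨(i : ℕ) + (k : ℕ), by have := k.isLt; omega⟩ with he
    have hqpath : IsTMDPPath trans m q e := by
      intro k
      have hk : (i : ℕ) + (k : ℕ) < n := by have := k.isLt; omega
      obtain ⟨ν, h1, h2⟩ := hpath ⟨(i : ℕ) + (k : ℕ), hk⟩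
      refine ⟨ν, ?_, ?_⟩
      · have e1 : q k.castSucc = p (Fin.castSucc ⟨(i : ℕ) + (k : ℕ), hk⟩) := by
          apply congrArg p; apply Fin.ext; simp
        have e2 : e k = d ⟨(i : ℕ) + (k : ℕ), hk⟩ := rfl
        rw [e1, e2]; exact h1
      · have e3 : q k.succ = p (Fin.succ ⟨(i : ℕ) + (k : ℕ), hk⟩) := by
          apply congrArg p; apply Fin.ext; simp [Nat.add_assoc]
        rw [e3]; exact h2
    have hcyc : q 0 = q (Fin.last m) := by
      have e0 : q 0 = p i := by
        apply congrArg p; apply Fin.ext; simp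
      have eL : q (Fin.last m) = p j := by
        apply congrArg p; apply Fin.ext; simp [him]
      rw [e0, eL]; exact hpij
    have hpos := hNZ m q e hm0 hqpath hcyc
    -- total duration of the cycle is zero
    have hIco : ∑ k ∈ Finset.Ico (i : ℕ) (j : ℕ), d' k = 0 := by
      have hsplit := Finset.sum_Ico_consecutive d' (Nat.zero_le (i : ℕ)) (le_of_lt hij)
      have hri : ∑ k ∈ Finset.Ico 0 (i : ℕ), d' k = s i := by
        rw [hs]; simp only [Finset.range_eq_Ico]
      have hrj : ∑ k ∈ Finset.Ico 0 (j : ℕ), d' k = s j := by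
        rw [hs]; simp only [Finset.range_eq_Ico]
      omega
    have hzero : ∀ k ∈ Finset.Ico (i : ℕ) (j : ℕ), d' k = 0 :=
      (Finset.sum_eq_zero_iff).mp hIco
    have hesum : ∑ k, e k = 0 := by
      apply Finset.sum_eq_zero
      intro k _
      have hk : (i : ℕ) + (k : ℕ) < n := by have := k.isLt; omega
      have hmem : (i : ℕ) + (k : ℕ) ∈ Finset.Ico (i : ℕ) (j : ℕ) := by
        simp [Finset.mem_Ico]; omega
      have := hzero _ hmem
      rw [hd'] at this
      simpa [he, dif_pos hk] using this
    rw [hesum] at hpos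
    exact absurd hpos (lt_irrefl 0)
  -- injective map into Fin (D+1) × S
  have hinj : Function.Injective
      (fun i : Fin (n + 1) => ((⟨s i, Nat.lt_succ_of_le (hbound i)⟩ : Fin (D + 1)), p i)) := by
    intro i j hij
    simp only [Prod.mk.injEq, Fin.mk.injEq] at hij
    rcases lt_trichotomy (i : ℕ) (j : ℕ) with h | h | h
    · exact absurd (key i j h hij.1 hij.2) (fun f => f)
    · exact Fin.ext h
    · exact absurd (key j i h hij.1.symm hij.2.symm) (fun f => f)
  have hcard := Fintype.card_le_of_injective _ hinj
  simp [Fintype.card_fin, Fintype.card_prod] at hcard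
  omega
end

section
/- In the two-player game on a structurally non-Zeno discrete TMDP where player P_n chooses transitions and player P_p chooses successors in the support, if α^i(s) < ∞ then α^i(s) equals the minimal total duration that player P_p can guarantee for reaching a Φ₂-state along a Φ₁-path from s within at most i rounds; if α^i(s) = ∞ then P_p cannot guarantee reaching Φ₂ along a Φ₁-path within i rounds. -/
open scoped Classical

/-- The value iteration `α^i` on the discrete TMDP. -/
noncomputable def alphaIter {S : Type*} (trans : Set (S × ℕ × PMF S))
    (Φ₁ Φ₂ : S → Prop) : ℕ → S → ℕ∞
  | 0, s => if Φ₂ s then 0 else ⊤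
  | i + 1, s =>
    if Φ₂ s then 0
    else if ¬ Φ₁ s then ⊤
    else ⨆ (d : ℕ) (ν : PMF S) (_ : (s, d, ν) ∈ trans),
      ((d : ℕ∞) + ⨅ s' ∈ ν.support, alphaIter trans Φ₁ Φ₂ i s')

/-- `PEnsure trans Φ₁ Φ₂ i s D`: in the turn-based game where player `P_n` chooses a
transition `(s,d,ν) ∈ trans` from the current state and player `P_p` chooses a successor
in the support of `ν` (the round having duration `d`), player `P_p` can guarantee, within
at most `i` rounds and against any strategy of `P_n`, reaching a `Φ₂`-state along a path
whose intermediate states satisfy `Φ₁`, with total duration at most `D`.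
(Player `P_p`'s choice of successor is represented by the choice function `choice`.) -/
inductive PEnsure {S : Type*} (trans : Set (S × ℕ × PMF S)) (Φ₁ Φ₂ : S → Prop) :
    ℕ → S → ℕ → Prop
  | done (i : ℕ) (s : S) (D : ℕ) : Φ₂ s → PEnsure trans Φ₁ Φ₂ i s D
  | step (i : ℕ) (s : S) (D : ℕ)
      (choice : ∀ (d : ℕ) (ν : PMF S), (s, d, ν) ∈ trans → S) : Φ₁ s →
      (∀ (d : ℕ) (ν : PMF S) (h : (s, d, ν) ∈ trans),
        choice d ν h ∈ ν.support ∧ d ≤ D) →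
      (∀ (d : ℕ) (ν : PMF S) (h : (s, d, ν) ∈ trans),
        PEnsure trans Φ₁ Φ₂ i (choice d ν h) (D - d)) →
      PEnsure trans Φ₁ Φ₂ (i + 1) s D

lemma pensure_alpha_le {S : Type*} {trans : Set (S × ℕ × PMF S)} {Φ₁ Φ₂ : S → Prop}
    {i : ℕ} {s : S} {D : ℕ} (h : PEnsure trans Φ₁ Φ₂ i s D) :
    alphaIter trans Φ₁ Φ₂ i s ≤ (D : ℕ∞) := by
  induction h with
  | done i s D h => cases i <;> simp [alphaIter, h]
  | step i s D choice hΦ₁ hc hrec ih =>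
    by_cases hΦ₂ : Φ₂ s
    · simp [alphaIter, hΦ₂]
    · rw [alphaIter, if_neg hΦ₂, if_neg (not_not_intro hΦ₁)]
      refine iSup_le fun d => iSup_le fun ν => iSup_le fun h => ?_
      have hd : d ≤ D := (hc d ν h).2
      calc (d : ℕ∞) + ⨅ s' ∈ ν.support, alphaIter trans Φ₁ Φ₂ i s'
          ≤ (d : ℕ∞) + alphaIter trans Φ₁ Φ₂ i (choice d ν h) :=
            add_le_add_right (iInf₂_le _ (hc d ν h).1) _
        _ ≤ (d : ℕ∞) + ((D - d : ℕ) : ℕ∞) := add_le_add_right (ih d ν h) _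
        _ = (D : ℕ∞) := by rw [← Nat.cast_add, Nat.add_sub_cancel' hd]

lemma alpha_le_pensure {S : Type*} {trans : Set (S × ℕ × PMF S)} {Φ₁ Φ₂ : S → Prop} :
    ∀ (i : ℕ) (s : S) (D : ℕ), alphaIter trans Φ₁ Φ₂ i s ≤ (D : ℕ∞) →
      PEnsure trans Φ₁ Φ₂ i s D := by
  intro i
  induction i with
  | zero =>
    intro s D h
    by_cases hΦ₂ : Φ₂ s
    · exact .done 0 s D hΦ₂
    · simp [alphaIter, hΦ₂] at h
  | succ i ih =>
    intro s D h
    by_cases hΦ₂ : Φ₂ s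
    · exact .done _ s D hΦ₂
    by_cases hΦ₁ : Φ₁ s
    · rw [alphaIter, if_neg hΦ₂, if_neg (not_not_intro hΦ₁)] at h
      have key : ∀ (d : ℕ) (ν : PMF S), (s, d, ν) ∈ trans →
          ∃ s', s' ∈ ν.support ∧ d ≤ D ∧ PEnsure trans Φ₁ Φ₂ i s' (D - d) := by
        intro d ν hmem
        have h1 : (d : ℕ∞) + ⨅ s' ∈ ν.support, alphaIter trans Φ₁ Φ₂ i s' ≤ (D : ℕ∞) :=
          le_trans (le_iSup_of_le d (le_iSup_of_le ν
            (le_iSup (fun _ : (s, d, ν) ∈ trans =>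
              (d : ℕ∞) + ⨅ s' ∈ ν.support, alphaIter trans Φ₁ Φ₂ i s') hmem))) h
        have hd : d ≤ D := by
          have : (d : ℕ∞) ≤ (D : ℕ∞) := le_trans le_self_add h1
          exact_mod_cast this
        have hex : ∃ s' ∈ ν.support, alphaIter trans Φ₁ Φ₂ i s' ≤ ((D - d : ℕ) : ℕ∞) := by
          by_contra hall
          push_neg at hall
          have hm : ((D - d : ℕ) : ℕ∞) + 1 ≤ ⨅ s' ∈ ν.support, alphaIter trans Φ₁ Φ₂ i s' :=
            le_iInf₂ fun s' hs' =>
              (ENat.add_one_le_iff (by exact_mod_cast WithTop.coe_ne_top)).mpr (hall s' hs')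
          have : (d : ℕ∞) + (((D - d : ℕ) : ℕ∞) + 1) ≤ (D : ℕ∞) :=
            le_trans (add_le_add_right hm _) h1
          rw [← add_assoc, ← Nat.cast_add, Nat.add_sub_cancel' hd] at this
          have h2 : (D + 1 : ℕ) ≤ D := by exact_mod_cast this
          omega
        obtain ⟨s', hs', hα⟩ := hex
        exact ⟨s', hs', hd, ih s' (D - d) hα⟩
      choose f hf1 hf2 hf3 using key
      exact .step i s D f hΦ₁ (fun d ν h => ⟨hf1 d ν h, hf2 d ν h⟩) (fun d ν h => hf3 d ν h)
    · simp [alphaIter, hΦ₂, hΦ₁] at h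

/-- If `α^i(s) < ∞` then `α^i(s)` is exactly the minimal total duration that
player `P_p` can guarantee for reaching a `Φ₂`-state along a `Φ₁`-path from `s` within at
most `i` rounds; if `α^i(s) = ∞` then `P_p` cannot guarantee reaching `Φ₂` along a
`Φ₁`-path within `i` rounds (for any duration bound). -/
theorem alphaIter_is_game_value {S : Type*} [Fintype S]
    (trans : Set (S × ℕ × PMF S)) (Φ₁ Φ₂ : S → Prop) :
    ∀ (i : ℕ) (s : S),
      (alphaIter trans Φ₁ Φ₂ i s ≠ ⊤ →
        ∃ D : ℕ, alphaIter trans Φ₁ Φ₂ i s = (D : ℕ∞) ∧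
          PEnsure trans Φ₁ Φ₂ i s D ∧
          ∀ D' : ℕ, PEnsure trans Φ₁ Φ₂ i s D' → D ≤ D') ∧
      (alphaIter trans Φ₁ Φ₂ i s = ⊤ →
        ∀ D : ℕ, ¬ PEnsure trans Φ₁ Φ₂ i s D) := by
  intro i s
  constructor
  · intro hne
    obtain ⟨D, hD⟩ := WithTop.ne_top_iff_exists.mp hne
    refine ⟨D, hD.symm, alpha_le_pensure i s D (le_of_eq hD.symm), fun D' hP => ?_⟩
    have h := pensure_alpha_le hP
    rw [← hD] at h
    exact WithTop.coe_le_coe.mp h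
  · intro htop D hP
    have h := pensure_alpha_le hP
    rw [htop] at h
    simp at h
end

section
/- In the reduction from countdown games to TMDPs: player 1 wins the countdown game C from configuration (s̄, c) if and only if in the associated TMDP there exists an adversary under which, with probability 1, a state is reached from s̄ at total elapsed duration exactly c. -/
open scoped Classical

/-- Player 1 wins the countdown game from configuration `(s, c)`. -/
inductive CountdownWin1 {S : Type*} (T : Set (S × ℕ × S)) : S → ℕ → Prop
  | zero (s : S) : CountdownWin1 T s 0
  | step (s : S) (c d : ℕ) : 0 < c → 0 < d → d ≤ c → (∃ s', (s, d, s') ∈ T) →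
      (∀ s'', (s, d, s'') ∈ T → CountdownWin1 T s'' (c - d)) →
      CountdownWin1 T s c

/-- In the TMDP `T_C` associated with the countdown game `(S, T)` (with distributions
`ν s d` for each available duration), `hitProb T ν A c h s` is the probability, under
the adversary `A` (which picks a duration given the history `h` of state–duration pairs
and the current state `s`), that the accumulated elapsed duration is exactly `c` at some
state along the path; `c` is the remaining budget.  A choice of a duration that is zero,
exceeds the budget, or has no transition contributes probability `0`. -/
noncomputable def hitProb {S : Type*} (T : Set (S × ℕ × S)) (ν : S → ℕ → PMF S)
    (A : List (S × ℕ) → S → ℕ) : ℕ → List (S × ℕ) → S → ENNReal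
  | 0, _, _ => 1
  | c + 1, h, s =>
      if hd : 0 < A h s ∧ A h s ≤ c + 1 ∧ ∃ s', (s, A h s, s') ∈ T then
        ∑' s', (ν s (A h s)) s' *
          hitProb T ν A (c + 1 - A h s) (h ++ [(s, A h s)]) s'
      else 0
  termination_by c _ _ => c
  decreasing_by omega

theorem hitProb_le_one {S : Type*} (T : Set (S × ℕ × S)) (ν : S → ℕ → PMF S)
    (A : List (S × ℕ) → S → ℕ) : ∀ n (h : List (S × ℕ)) s, hitProb T ν A n h s ≤ 1 := by
  intro n
  induction n using Nat.strong_induction_on with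
  | _ n ih =>
    intro h s
    match n with
    | 0 => rw [hitProb]
    | c + 1 =>
      rw [hitProb]
      split
      · rename_i hd
        calc ∑' s', (ν s (A h s)) s' * hitProb T ν A (c + 1 - A h s) (h ++ [(s, A h s)]) s'
            ≤ ∑' s', (ν s (A h s)) s' * 1 :=
              ENNReal.tsum_le_tsum fun s' => mul_le_mul_right (ih _ (by omega) _ _) _
          _ = 1 := by simpa using (ν s (A h s)).tsum_coe
      · exact zero_le_one

/-- The property a good duration choice should satisfy. -/
def advP {S : Type*} (T : Set (S × ℕ × S)) (s : S) (n d : ℕ) : Prop :=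
  0 < d ∧ d ≤ n ∧ (∃ s', (s, d, s') ∈ T) ∧
    ∀ s'', (s, d, s'') ∈ T → CountdownWin1 T s'' (n - d)

/-- A choice of a good duration, when one exists. -/
noncomputable def advD {S : Type*} (T : Set (S × ℕ × S)) (s : S) (n : ℕ) : ℕ :=
  if h : ∃ d, advP T s n d then h.choose else 0

theorem advD_spec {S : Type*} (T : Set (S × ℕ × S)) {s : S} {n : ℕ}
    (hw : CountdownWin1 T s n) (hn : 0 < n) : advP T s n (advD T s n) := by
  have hex : ∃ d, advP T s n d := by
    cases hw with
    | zero => omega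
    | step s c d hc hd hdc hne hall => exact ⟨d, hd, hdc, hne, hall⟩
  rw [advD, dif_pos hex]
  exact hex.choose_spec

theorem hitProb_eq_one_of_win {S : Type*} (T : Set (S × ℕ × S)) (ν : S → ℕ → PMF S)
    (hν : ∀ (s : S) (d : ℕ), (∃ s', (s, d, s') ∈ T) →
      (ν s d).support = {s' | (s, d, s') ∈ T})
    (c : ℕ) (A : List (S × ℕ) → S → ℕ)
    (HA : ∀ (h : List (S × ℕ)) s, A h s = advD T s (c - (h.map Prod.snd).sum)) :
    ∀ n (h : List (S × ℕ)) s, n + (h.map Prod.snd).sum = c → CountdownWin1 T s n →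
      hitProb T ν A n h s = 1 := by
  intro n
  induction n using Nat.strong_induction_on with
  | _ n ih =>
    intro h s hsum hwin
    match n with
    | 0 => rw [hitProb]
    | m + 1 =>
      have hA : A h s = advD T s (m + 1) := by
        rw [HA]; congr 1; omega
      have hP : advP T s (m + 1) (advD T s (m + 1)) := advD_spec T hwin (by omega)
      rw [← hA] at hP
      obtain ⟨hd0, hdle, hex, hall⟩ := hP
      rw [hitProb, dif_pos ⟨hd0, hdle, hex⟩]
      have hsupp := hν s (A h s) hex
      have : ∀ s', (ν s (A h s)) s' *
          hitProb T ν A (m + 1 - A h s) (h ++ [(s, A h s)]) s' = (ν s (A h s)) s' := by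
        intro s'
        by_cases hz : (ν s (A h s)) s' = 0
        · simp [hz]
        · have hmem : s' ∈ (ν s (A h s)).support := hz
          rw [hsupp] at hmem
          have hwin' : CountdownWin1 T s' (m + 1 - A h s) := hall s' hmem
          have hsum' : (m + 1 - A h s) + (((h ++ [(s, A h s)]).map Prod.snd).sum) = c := by
            simp only [List.map_append, List.sum_append, List.map_cons, List.map_nil,
              List.sum_cons, List.sum_nil]
            omega
          rw [ih _ (by omega) _ _ hsum' hwin', mul_one]
      rw [tsum_congr this]
      exact (ν s (A h s)).tsum_coe

theorem win_of_hitProb_eq_one {S : Type*} (T : Set (S × ℕ × S)) (ν : S → ℕ → PMF S)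
    (hν : ∀ (s : S) (d : ℕ), (∃ s', (s, d, s') ∈ T) →
      (ν s d).support = {s' | (s, d, s') ∈ T})
    (A : List (S × ℕ) → S → ℕ) :
    ∀ n (h : List (S × ℕ)) s, hitProb T ν A n h s = 1 → CountdownWin1 T s n := by
  intro n
  induction n using Nat.strong_induction_on with
  | _ n ih =>
    intro h s hone
    match n with
    | 0 => exact CountdownWin1.zero s
    | m + 1 =>
      rw [hitProb] at hone
      by_cases hd : 0 < A h s ∧ A h s ≤ m + 1 ∧ ∃ s', (s, A h s, s') ∈ T
      · rw [dif_pos hd] at hone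
        obtain ⟨hd0, hdle, hex⟩ := hd
        have key : ∀ s', (ν s (A h s)) s' ≠ 0 →
            hitProb T ν A (m + 1 - A h s) (h ++ [(s, A h s)]) s' = 1 := by
          by_contra hcon
          push_neg at hcon
          obtain ⟨s0, hs0, hne⟩ := hcon
          have hlt : hitProb T ν A (m + 1 - A h s) (h ++ [(s, A h s)]) s0 < 1 :=
            lt_of_le_of_ne (hitProb_le_one T ν A _ _ _) hne
          have h1 : (∑' s', (ν s (A h s)) s' *
              hitProb T ν A (m + 1 - A h s) (h ++ [(s, A h s)]) s') <
              ∑' s', (ν s (A h s)) s' := by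
            refine ENNReal.tsum_lt_tsum ?_ ?_ (i := s0) ?_
            · rw [hone]; exact ENNReal.one_ne_top
            · intro i
              calc (ν s (A h s)) i * hitProb T ν A (m + 1 - A h s) (h ++ [(s, A h s)]) i
                  ≤ (ν s (A h s)) i * 1 :=
                    mul_le_mul_right (hitProb_le_one T ν A _ _ _) _
                _ = (ν s (A h s)) i := mul_one _
            · calc (ν s (A h s)) s0 * hitProb T ν A (m + 1 - A h s) (h ++ [(s, A h s)]) s0
                  < (ν s (A h s)) s0 * 1 :=
                    ENNReal.mul_lt_mul_right hs0 (PMF.apply_ne_top _ _) hlt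
                _ = (ν s (A h s)) s0 := mul_one _
          rw [hone, (ν s (A h s)).tsum_coe] at h1
          exact lt_irrefl 1 h1
        refine CountdownWin1.step s (m + 1) (A h s) (by omega) hd0 hdle hex ?_
        intro s'' hmem
        have hz : (ν s (A h s)) s'' ≠ 0 := by
          have : s'' ∈ (ν s (A h s)).support := by rw [hν s (A h s) hex]; exact hmem
          exact this
        exact ih _ (by omega) _ _ (key s'' hz)
      · rw [dif_neg hd] at hone
        exact absurd hone (by simp)

/-- player 1 wins the countdown game `C = (S, T)` from configuration
`(s̄, c)` iff in the associated TMDP — same states; for each state `s` and available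
duration `d` one transition `(s, d, ν s d)` where `ν s d` has support
`{s' : (s,d,s') ∈ T}` — there exists an adversary under which, with probability 1, a
state is reached from `s̄` at total elapsed duration exactly `c`. -/
theorem countdown_iff_TMDP_prob_one_exact_duration {S : Type*}
    (T : Set (S × ℕ × S)) (hpos : ∀ t ∈ T, 0 < t.2.1)
    (ν : S → ℕ → PMF S)
    (hν : ∀ (s : S) (d : ℕ), (∃ s', (s, d, s') ∈ T) →
      (ν s d).support = {s' | (s, d, s') ∈ T})
    (sbar : S) (c : ℕ) :
    CountdownWin1 T sbar c ↔
      ∃ A : List (S × ℕ) → S → ℕ, hitProb T ν A c [] sbar = 1 := by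
  constructor
  · intro hwin
    refine ⟨fun h s => advD T s (c - (h.map Prod.snd).sum), ?_⟩
    exact hitProb_eq_one_of_win T ν hν c _ (fun _ _ => rfl) c [] sbar (by simp) hwin
  · rintro ⟨A, hA⟩
    exact win_of_hitProb_eq_one T ν hν A c [] sbar hA
end
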